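/- Let A be a commutative ring, t ∈ A, and define Ĝ_III(A) = {(e, b(W)) ∈ A × A[[W]] : e − 1 and all coefficients of b(W) are nilpotent} with product (e, b(W)) ⋆ (g, c(W)) = (eg, b(gW + (g−1)t) + c(W)). Then Ĝ_III(A) is a group with unit (1, 0) and inverse (e, b(W))⁻¹ = (e⁻¹, −b(e⁻¹W + (e⁻¹−1)t)). -/

import Mathlib

/-- Substitution of the linear polynomial `uW + c` (with `c` nilpotent) into a
power series `b(W)`. -/
noncomputable def substLin {A : Type*} [CommRing A] (u c : A)
    (b : PowerSeries A) : PowerSeries A :=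
  PowerSeries.mk fun n => ∑ᶠ k : ℕ, PowerSeries.coeff k b *
    ((Polynomial.C u * Polynomial.X + Polynomial.C c) ^ k).coeff n

/-- `Ĝ_III(A)`: pairs `(e, b(W))` with `e - 1` and all coefficients of
`b(W)` nilpotent. -/
def GIII (A : Type*) [CommRing A] : Set (A × PowerSeries A) :=
  {p | IsNilpotent (p.1 - 1) ∧ ∀ n : ℕ, IsNilpotent (PowerSeries.coeff n p.2)}

/-- The product `(e,b(W)) ⋆ (g,c(W)) = (eg, b(gW + (g-1)t) + c(W))`. -/
noncomputable def mulIII {A : Type*} [CommRing A] (t : A)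
    (x y : A × PowerSeries A) : A × PowerSeries A :=
  (x.1 * y.1, substLin y.1 ((y.1 - 1) * t) x.2 + y.2)

/-- The inverse `(e, b(W))⁻¹ = (e⁻¹, -b(e⁻¹W + (e⁻¹-1)t))`. -/
noncomputable def invIII {A : Type*} [CommRing A] (t : A)
    (x : A × PowerSeries A) : A × PowerSeries A :=
  (Ring.inverse x.1,
    -(substLin (Ring.inverse x.1) ((Ring.inverse x.1 - 1) * t) x.2))

open Polynomial

section Aux

variable {A : Type*} [CommRing A]

/-- Vanishing of high coefficients of `(C u * X + C c)^k` when `c` is nilpotent. -/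
lemma coeffP_zero (u c : A) {N : ℕ} (hc : c ^ N = 0) {n k : ℕ} (hk : n + N ≤ k) :
    ((C u * X + C c) ^ k).coeff n = 0 := by
  have hcc : c ^ (k - n) = 0 := by
    have h1 : c ^ (k - n) = c ^ N * c ^ (k - n - N) := by
      rw [← pow_add]; congr 1; omega
    rw [h1, hc, zero_mul]
  rw [(Commute.all (C u * X) (C c : A[X])).add_pow, Polynomial.finset_sum_coeff]
  apply Finset.sum_eq_zero
  intro i _
  have key : (C u * X : A[X]) ^ i * (C c) ^ (k - i) * ((k.choose i : ℕ) : A[X]) =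
      C (u ^ i * c ^ (k - i) * ((k.choose i : ℕ) : A)) * X ^ i := by
    rw [mul_pow, ← C_pow, ← C_pow, ← C_eq_natCast (R := A), C_mul, C_mul]
    ring
  rw [key, coeff_C_mul, coeff_X_pow]
  by_cases h : n = i
  · subst h; simp [hcc]
  · rw [if_neg h, mul_zero]

/-- Finite-sum description of the coefficients of `substLin`. -/
lemma substLin_coeff (u c : A) (b : PowerSeries A) {N : ℕ} (hc : c ^ N = 0)
    {n M : ℕ} (hM : n + N ≤ M) :
    PowerSeries.coeff n (substLin u c b) =
      ∑ k ∈ Finset.range M,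
        PowerSeries.coeff k b * ((C u * X + C c) ^ k).coeff n := by
  rw [substLin, PowerSeries.coeff_mk]
  apply finsum_eq_finset_sum_of_support_subset
  intro k hk
  simp only [Finset.coe_range, Set.mem_Iio]
  by_contra hMk
  push_neg at hMk
  refine hk ?_
  show PowerSeries.coeff k b * ((C u * X + C c) ^ k).coeff n = 0
  rw [coeffP_zero u c hc (le_trans hM hMk), mul_zero]

lemma substLin_zero (u c : A) : substLin u c (0 : PowerSeries A) = 0 := by
  ext n
  simp [substLin]

lemma substLin_one_zero (b : PowerSeries A) : substLin (1 : A) 0 b = b := by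
  ext n
  rw [substLin, PowerSeries.coeff_mk]
  simp only [map_one, map_zero, one_mul, add_zero, coeff_X_pow]
  rw [finsum_eq_single _ n (fun k hk => by rw [if_neg (fun h => hk h.symm), mul_zero])]
  simp

lemma substLin_add (u c : A) (hc : IsNilpotent c) (b b' : PowerSeries A) :
    substLin u c (b + b') = substLin u c b + substLin u c b' := by
  obtain ⟨N, hN⟩ := hc
  ext n
  rw [map_add, substLin_coeff u c _ hN (le_refl (n + N)),
    substLin_coeff u c b hN (le_refl (n + N)),
    substLin_coeff u c b' hN (le_refl (n + N)), ← Finset.sum_add_distrib]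
  exact Finset.sum_congr rfl fun k _ => by rw [map_add, add_mul]

lemma substLin_neg (u c : A) (hc : IsNilpotent c) (b : PowerSeries A) :
    substLin u c (-b) = -substLin u c b := by
  obtain ⟨N, hN⟩ := hc
  ext n
  rw [map_neg, substLin_coeff u c _ hN (le_refl (n + N)),
    substLin_coeff u c b hN (le_refl (n + N)), ← Finset.sum_neg_distrib]
  exact Finset.sum_congr rfl fun k _ => by rw [map_neg, neg_mul]

lemma substLin_nilpotent (u c : A) (hc : IsNilpotent c) (b : PowerSeries A)
    (hb : ∀ n, IsNilpotent (PowerSeries.coeff n b)) (n : ℕ) :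
    IsNilpotent (PowerSeries.coeff n (substLin u c b)) := by
  obtain ⟨N, hN⟩ := hc
  rw [substLin_coeff u c b hN (le_refl (n + N))]
  exact isNilpotent_sum fun k _ => (Commute.all _ _).isNilpotent_mul_right (hb k)

/-- Coefficients of a polynomial composition as a finite sum. -/
lemma comp_coeff (p q : A[X]) {n M : ℕ} (hM : p.natDegree < M) :
    (p.comp q).coeff n = ∑ k ∈ Finset.range M, p.coeff k * (q ^ k).coeff n := by
  rw [comp_eq_sum_left, Polynomial.sum_over_range' p (by simp) M hM,
    Polynomial.finset_sum_coeff]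
  exact Finset.sum_congr rfl fun k _ => by rw [coeff_C_mul]

/-- Composition law for linear substitutions. -/
lemma substLin_comp (u c u' c' : A) (hc : IsNilpotent c) (hc' : IsNilpotent c')
    (b : PowerSeries A) :
    substLin u' c' (substLin u c b) = substLin (u * u') (u * c' + c) b := by
  obtain ⟨N, hN⟩ := hc
  obtain ⟨N', hN'⟩ := hc'
  have hc'' : IsNilpotent (u * c' + c) :=
    (Commute.all _ _).isNilpotent_add ((Commute.all _ _).isNilpotent_mul_left ⟨N', hN'⟩)
      ⟨N, hN⟩
  obtain ⟨N'', hN''⟩ := hc''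
  ext n
  set P : A[X] := C u * X + C c with hP
  set Q : A[X] := C u' * X + C c' with hQ
  have hPQ : (C (u * u') * X + C (u * c' + c) : A[X]) = P.comp Q := by
    rw [hP, hQ]
    simp only [add_comp, mul_comp, C_comp, X_comp, C_mul, C_add]
    ring
  set M1 := n + N' with hM1
  set M2 := M1 + N + (n + N'') with hM2
  rw [substLin_coeff u' c' _ hN' (le_refl M1),
    substLin_coeff (u * u') (u * c' + c) b hN''
      (show n + N'' ≤ M2 by omega)]
  have hstep : ∀ k ∈ Finset.range M1,
      PowerSeries.coeff k (substLin u c b) * (Q ^ k).coeff n =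
      ∑ j ∈ Finset.range M2,
        PowerSeries.coeff j b * ((P ^ j).coeff k * (Q ^ k).coeff n) := by
    intro k hk
    rw [Finset.mem_range] at hk
    rw [substLin_coeff u c b hN (show k + N ≤ M2 by omega), Finset.sum_mul]
    exact Finset.sum_congr rfl fun j _ => by rw [mul_assoc]
  rw [Finset.sum_congr rfl hstep, Finset.sum_comm]
  apply Finset.sum_congr rfl
  intro j _
  have hcomp : ((P ^ j).comp Q).coeff n
      = ∑ k ∈ Finset.range M1, (P ^ j).coeff k * (Q ^ k).coeff n := by
    rw [comp_coeff (P ^ j) Q (M := max M1 ((P ^ j).natDegree + 1))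
      (lt_of_lt_of_le (Nat.lt_succ_self _) (le_max_right _ _))]
    symm
    apply Finset.sum_subset (Finset.range_subset_range.mpr (le_max_left _ _))
    intro k _ hk
    rw [Finset.mem_range, not_lt] at hk
    rw [hQ, coeffP_zero u' c' hN' (show n + N' ≤ k from hk), mul_zero]
  rw [← Finset.mul_sum, hPQ, ← pow_comp, hcomp]

end Aux

/-- `Ĝ_III(A)` is a group under `⋆` with unit `(1,0)` and inverse
`(e⁻¹, -b(e⁻¹W + (e⁻¹-1)t))`. -/
theorem GIII_is_group (A : Type*) [CommRing A] (t : A) :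
    (∀ x ∈ GIII A, ∀ y ∈ GIII A, mulIII t x y ∈ GIII A) ∧
    (∀ x ∈ GIII A, ∀ y ∈ GIII A, ∀ z ∈ GIII A,
      mulIII t (mulIII t x y) z = mulIII t x (mulIII t y z)) ∧
    (((1 : A), (0 : PowerSeries A)) ∈ GIII A ∧
      ∀ x ∈ GIII A, mulIII t x (1, 0) = x ∧ mulIII t (1, 0) x = x) ∧
    (∀ x ∈ GIII A, invIII t x ∈ GIII A ∧
      mulIII t x (invIII t x) = (1, 0) ∧ mulIII t (invIII t x) x = (1, 0)) := by
  have nilc : ∀ x : A × PowerSeries A, x ∈ GIII A → IsNilpotent ((x.1 - 1) * t) :=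
    fun x hx => (Commute.all _ _).isNilpotent_mul_right hx.1
  refine ⟨?closure, ?assoc, ⟨?memone, ?unit⟩, ?inv⟩
  case closure =>
    intro x hx y hy
    constructor
    · have h : x.1 * y.1 - 1 = (x.1 - 1) * y.1 + (y.1 - 1) := by ring
      rw [mulIII]
      simp only [h]
      exact (Commute.all _ _).isNilpotent_add
        ((Commute.all _ _).isNilpotent_mul_right hx.1) hy.1
    · intro n
      rw [mulIII]
      simp only [map_add]
      exact (Commute.all _ _).isNilpotent_add
        (substLin_nilpotent _ _ (nilc y hy) _ hx.2 n) (hy.2 n)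
  case assoc =>
    intro x hx y hy z hz
    apply Prod.ext
    · exact mul_assoc _ _ _
    · show substLin z.1 ((z.1 - 1) * t) (substLin y.1 ((y.1 - 1) * t) x.2 + y.2) + z.2 =
        substLin (y.1 * z.1) ((y.1 * z.1 - 1) * t) x.2 +
          (substLin z.1 ((z.1 - 1) * t) y.2 + z.2)
      rw [substLin_add _ _ (nilc z hz),
        substLin_comp _ _ _ _ (nilc y hy) (nilc z hz),
        show y.1 * ((z.1 - 1) * t) + (y.1 - 1) * t = (y.1 * z.1 - 1) * t by ring,
        add_assoc]
  case memone =>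
    exact ⟨by simp, fun n => by simp⟩
  case unit =>
    intro x hx
    constructor
    · apply Prod.ext
      · exact mul_one _
      · show substLin 1 ((1 - 1) * t) x.2 + 0 = x.2
        rw [show ((1 : A) - 1) * t = 0 by ring, substLin_one_zero, add_zero]
    · apply Prod.ext
      · exact one_mul _
      · show substLin x.1 ((x.1 - 1) * t) 0 + x.2 = x.2
        rw [substLin_zero, zero_add]
  case inv =>
    intro x hx
    have hu : IsUnit x.1 := by
      have h := hx.1.isUnit_one_add
      rwa [show (1 : A) + (x.1 - 1) = x.1 by ring] at h
    have h1 : Ring.inverse x.1 * x.1 = 1 := Ring.inverse_mul_cancel _ hu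
    have h2 : x.1 * Ring.inverse x.1 = 1 := Ring.mul_inverse_cancel _ hu
    have hinv : IsNilpotent (Ring.inverse x.1 - 1) := by
      have h3 : Ring.inverse x.1 - 1 = Ring.inverse x.1 * -(x.1 - 1) := by
        rw [mul_neg, mul_sub, h1, mul_one, neg_sub]
      rw [h3]
      exact (Commute.all _ _).isNilpotent_mul_left hx.1.neg
    have hmem : invIII t x ∈ GIII A := by
      refine ⟨hinv, fun n => ?_⟩
      rw [invIII]
      simp only [map_neg]
      exact (substLin_nilpotent _ _
        ((Commute.all _ _).isNilpotent_mul_right hinv) _ hx.2 n).neg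
    refine ⟨hmem, ?_, ?_⟩
    · apply Prod.ext
      · exact h2
      · show substLin (Ring.inverse x.1) ((Ring.inverse x.1 - 1) * t) x.2 +
          -(substLin (Ring.inverse x.1) ((Ring.inverse x.1 - 1) * t) x.2) = 0
        exact add_neg_cancel _
    · apply Prod.ext
      · exact h1
      · show substLin x.1 ((x.1 - 1) * t)
            (-(substLin (Ring.inverse x.1) ((Ring.inverse x.1 - 1) * t) x.2)) + x.2 = 0
        rw [substLin_neg _ _ (nilc x hx),
          substLin_comp _ _ _ _ ((Commute.all _ _).isNilpotent_mul_right hinv) (nilc x hx),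
          show Ring.inverse x.1 * ((x.1 - 1) * t) + (Ring.inverse x.1 - 1) * t =
            (Ring.inverse x.1 * x.1 - 1) * t by ring, h1,
          show ((1 : A) - 1) * t = 0 by ring, substLin_one_zero, neg_add_cancel]
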